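/- Let h ⊆ so(V) be a Lie subalgebra, T ∈ Λ³V an h-invariant 3-form, and R: Λ²V → h ⊆ Λ²V a symmetric linear map (with respect to the induced inner product on Λ²V). Then the second Bianchi condition Σ_cyclic{X,Y,Z} R(T(X,Y) ∧ Z) = 0 holds automatically. -/

import Mathlib

/- STATEMENT 5: Let h ⊆ so(V) be a Lie subalgebra, T ∈ Λ³V an h-invariant 3-form, and
R : Λ²V → h ⊆ Λ²V a symmetric linear map (with respect to the induced inner product on Λ²V,
which for the bilinear encoding `R : V →ₗ V →ₗ End(V)` of R on decomposables reads
⟨R(X∧Y)Z, W⟩ = ⟨R(Z∧W)X, Y⟩). Then the second Bianchi condition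
Σ_cyclic{X,Y,Z} R(T(X,Y) ∧ Z) = 0 holds automatically.

`Tv X Y` is the vector dual to the 1-form T(X,Y,·). -/

open scoped RealInnerProductSpace

lemma alt_cyc {E : Type*} [NormedAddCommGroup E] [InnerProductSpace ℝ E]
    (T : AlternatingMap ℝ E ℝ (Fin 3)) (a b c : E) :
    T ![a, b, c] = T ![c, a, b] := by
  have h1 := T.map_swap ![a, b, c] (by decide : (0 : Fin 3) ≠ 1)
  have h2 := T.map_swap ![c, a, b] (by decide : (1 : Fin 3) ≠ 2)
  have e1 : (![a, b, c] ∘ Equiv.swap (0 : Fin 3) 1) = ![b, a, c] := by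
    funext i; fin_cases i <;> simp [Equiv.swap_apply_def]
  have e2 : (![c, a, b] ∘ Equiv.swap (1 : Fin 3) 2) = ![c, b, a] := by
    funext i; fin_cases i <;> simp [Equiv.swap_apply_def]
  have h3 := T.map_swap ![c, b, a] (by decide : (0 : Fin 3) ≠ 2)
  have e3 : (![c, b, a] ∘ Equiv.swap (0 : Fin 3) 2) = ![a, b, c] := by
    funext i; fin_cases i <;> simp [Equiv.swap_apply_def]
  rw [e1] at h1; rw [e2] at h2; rw [e3] at h3
  linarith

attribute [local instance 100] LieRing.ofAssociativeRing

theorem second_bianchi_automatic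
    {E : Type*} [NormedAddCommGroup E] [InnerProductSpace ℝ E]
    (h : LieSubalgebra ℝ (Module.End ℝ E))
    (hskew : ∀ A ∈ h, ∀ X Y : E, ⟪A X, Y⟫ = -⟪X, A Y⟫)
    (T : AlternatingMap ℝ E ℝ (Fin 3)) (Tv : E → E → E)
    (hTv : ∀ X Y Z : E, ⟪Tv X Y, Z⟫ = T ![X, Y, Z])
    (hTinv : ∀ A ∈ h, ∀ X Y Z : E,
      T ![A X, Y, Z] + T ![X, A Y, Z] + T ![X, Y, A Z] = 0)
    (R : E →ₗ[ℝ] E →ₗ[ℝ] Module.End ℝ E)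
    (hRalt : ∀ X : E, R X X = 0)
    (hRmem : ∀ X Y : E, R X Y ∈ h)
    (hRsymm : ∀ X Y Z W : E, ⟪(R X Y) Z, W⟫ = ⟪(R Z W) X, Y⟫)
    (X Y Z : E) :
    R (Tv X Y) Z + R (Tv Y Z) X + R (Tv Z X) Y = 0 := by
  have key : ∀ W U : E,
      ⟪(R (Tv X Y) Z + R (Tv Y Z) X + R (Tv Z X) Y) W, U⟫ = 0 := by
    intro W U
    have hA := hRmem W U
    set A : Module.End ℝ E := R W U with hAdef
    have t1 : ⟪(R (Tv X Y) Z) W, U⟫ = -T ![X, Y, A Z] := by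
      rw [hRsymm, hskew A hA, hTv]
    have t2 : ⟪(R (Tv Y Z) X) W, U⟫ = -T ![A X, Y, Z] := by
      rw [hRsymm, hskew A hA, hTv, alt_cyc T (A X) Y Z, alt_cyc T Z (A X) Y]
    have t3 : ⟪(R (Tv Z X) Y) W, U⟫ = -T ![X, A Y, Z] := by
      rw [hRsymm, hskew A hA, hTv, alt_cyc T X (A Y) Z]
    have hsum := hTinv A hA X Y Z
    simp only [LinearMap.add_apply, inner_add_left, t1, t2, t3]
    linarith
  ext W
  exact inner_self_eq_zero.mp (key W _)
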